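/- Let X, V, W be objects of A, let g : V ⟶ W be a morphism viewed as an object of Arrow(A), and let z_X : 0 ⟶ X be the unique morphism from a zero object of A to X, viewed as an object of Arrow(A). Then for every n ∈ ℕ there is an isomorphism of abelian groups Ext^n_{Arrow(A)}(z_X, g) ≅ Ext^n_A(X, W). -/

import Mathlib

open CategoryTheory Limits

universe w v u

variable (A : Type u) [Category.{v} A] [Abelian A]

/-- The functor `F : A × A ⥤ Arrow A` sending `(X, Y)` to the object
`biprod.inl : X ⟶ X ⊞ Y` of the arrow category. -/
@[simps]
noncomputable def ArrF : A × A ⥤ Arrow A where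
  obj p := Arrow.mk (biprod.inl : p.1 ⟶ p.1 ⊞ p.2)
  map {p q} φ := Arrow.homMk (u := φ.1) (v := biprod.map φ.1 φ.2) (by simp)

/-- The forgetful functor `G : Arrow A ⥤ A × A` sending an object `f : X ⟶ Y` of the
arrow category to the pair `(X, Y)`. -/
@[simps]
def ArrG : Arrow A ⥤ A × A where
  obj f := (f.left, f.right)
  map φ := (φ.left, φ.right)

variable {A}

/-- The counit morphism `ε_f : FG(f) ⟶ f`, whose domain component is `𝟙 X` and whose
codomain component is `biprod.desc f 𝟙 : X ⊞ Y ⟶ Y`. -/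
noncomputable def arrCounit (f : Arrow A) : (ArrF A).obj ((ArrG A).obj f) ⟶ f :=
  Arrow.homMk (u := 𝟙 f.left) (v := biprod.desc f.hom (𝟙 f.right))
    (by first | (dsimp [ArrF, ArrG]; simp) | simp [ArrF, ArrG] | (change 𝟙 f.left ≫ f.hom = biprod.inl ≫ biprod.desc f.hom (𝟙 f.right); simp))

namespace St16

open ZeroObject

variable (A) in
/-- The functor `A ⥤ Arrow A` sending `Y` to `0 ⟶ Y`. -/
@[simps, reducible]
noncomputable def ZF : A ⥤ Arrow A where
  obj Y := Arrow.mk (0 : (0 : A) ⟶ Y)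
  map f := Arrow.homMk (u := 𝟙 0) (v := f) (by simp)
  map_id Y := by ext <;> simp
  map_comp f g := by ext <;> simp

variable (A) in
/-- The right/target functor. -/
@[simps, reducible]
def RF : Arrow A ⥤ A where
  obj f := f.right
  map φ := φ.right

variable (A) in
/-- The cokernel functor. -/
@[simps, reducible]
noncomputable def KF : Arrow A ⥤ A where
  obj f := cokernel f.hom
  map φ := cokernel.map _ _ φ.left φ.right φ.w.symm
  map_id f := by simp
  map_comp φ ψ := by ext; simp

variable (A) in
/-- The identity-arrow functor. -/
@[simps, reducible]
def SF : A ⥤ Arrow A where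
  obj Y := Arrow.mk (𝟙 Y)
  map f := Arrow.homMk (u := f) (v := f) (by simp)

variable [Abelian (Arrow A)]

attribute [-instance] CategoryTheory.instPreadditiveArrow

/-- `KF ⊣ ZF`. -/
noncomputable def adjKZ : KF A ⊣ ZF A :=
  Adjunction.mkOfHomEquiv
    { homEquiv := fun f Y =>
        { toFun := fun c => Arrow.homMk (u := 0) (v := cokernel.π _ ≫ c) (by simp)
          invFun := fun φ => cokernel.desc _ φ.right (by
            have h := φ.w
            dsimp at h
            rw [← h, comp_zero])
          left_inv := fun c => by
            rw [← cancel_epi (cokernel.π f.hom)]; simp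
          right_inv := fun φ => by
            ext
            · apply (isZero_zero A).eq_of_tgt
            · simp }
      homEquiv_naturality_left_symm := fun φ ψ => by dsimp; ext; simp; exact cokernel.π_desc _ _ _
      homEquiv_naturality_right := fun φ ψ => by dsimp; ext <;> simp }

/-- `ZF ⊣ RF`. -/
noncomputable def adjZR : ZF A ⊣ RF A :=
  Adjunction.mkOfHomEquiv
    { homEquiv := fun Y f =>
        { toFun := fun φ => φ.right
          invFun := fun v => Arrow.homMk (u := 0) (v := v) (by simp)
          left_inv := fun φ => by
            ext
            · apply (isZero_zero A).eq_of_src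
            · simp
          right_inv := fun v => rfl }
      homEquiv_naturality_left_symm := fun φ ψ => by
        ext
        · apply (isZero_zero A).eq_of_src
        · rfl
      homEquiv_naturality_right := fun φ ψ => rfl }

/-- `RF ⊣ SF`. -/
noncomputable def adjRS : RF A ⊣ SF A :=
  Adjunction.mkOfHomEquiv
    { homEquiv := fun f Y =>
        { toFun := fun v => Arrow.homMk (u := f.hom ≫ v) (v := v) (by simp)
          invFun := fun φ => φ.right
          left_inv := fun v => rfl
          right_inv := fun φ => by
            ext
            · have h := φ.w; dsimp at h ⊢; simpa using h.symm
            · simp }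
      homEquiv_naturality_left_symm := fun φ ψ => by aesop_cat
      homEquiv_naturality_right := fun φ ψ => by
        ext
        · exact (Category.assoc _ _ _).symm
        · rfl }

instance : (ZF A).IsLeftAdjoint := ⟨_, ⟨adjZR⟩⟩
instance : (ZF A).IsRightAdjoint := ⟨_, ⟨adjKZ⟩⟩
instance : (RF A).IsLeftAdjoint := ⟨_, ⟨adjRS⟩⟩
instance : (RF A).IsRightAdjoint := ⟨_, ⟨adjZR⟩⟩

noncomputable instance : PreservesLimitsOfSize.{v, v} (ZF A) :=
  adjKZ.rightAdjoint_preservesLimits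
noncomputable instance : PreservesColimitsOfSize.{v, v} (ZF A) :=
  adjZR.leftAdjoint_preservesColimits
noncomputable instance : PreservesLimitsOfSize.{v, v} (RF A) :=
  adjZR.rightAdjoint_preservesLimits
noncomputable instance : PreservesColimitsOfSize.{v, v} (RF A) :=
  adjRS.leftAdjoint_preservesColimits

noncomputable instance : PreservesFiniteLimits (ZF A) := ⟨fun _ => inferInstance⟩
noncomputable instance : PreservesFiniteColimits (ZF A) := ⟨fun _ => inferInstance⟩
noncomputable instance : PreservesFiniteLimits (RF A) := ⟨fun _ => inferInstance⟩
noncomputable instance : PreservesFiniteColimits (RF A) := ⟨fun _ => inferInstance⟩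

noncomputable instance : (ZF A).Additive :=
  Functor.additive_of_preserves_binary_products _
noncomputable instance : (RF A).Additive :=
  Functor.additive_of_preserves_binary_products _

/-- The adjunction `adjZR` lifted to cochain complexes. -/
noncomputable def adjHC :
    (ZF A).mapHomologicalComplex (ComplexShape.up ℤ) ⊣
      (RF A).mapHomologicalComplex (ComplexShape.up ℤ) :=
  Adjunction.mkOfUnitCounit
    { unit :=
        { app := fun K =>
            { f := fun i => adjZR.unit.app (K.X i)
              comm' := fun i j _ => (adjZR.unit.naturality (K.d i j)).symm }
          naturality := fun K L φ => by
            apply HomologicalComplex.hom_ext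
            intro i
            exact adjZR.unit.naturality (φ.f i) }
      counit :=
        { app := fun L =>
            { f := fun i => adjZR.counit.app (L.X i)
              comm' := fun i j _ => (adjZR.counit.naturality (L.d i j)).symm }
          naturality := fun K L φ => by
            apply HomologicalComplex.hom_ext
            intro i
            exact adjZR.counit.naturality (φ.f i) }
      left_triangle := by
        apply NatTrans.ext
        funext K
        apply HomologicalComplex.hom_ext
        intro i
        have h := adjZR.left_triangle_components (K.X i)
        ext
        · apply (Limits.isZero_zero A).eq_of_src
        · simp; exact congrArg CommaMorphism.right h
      right_triangle := by
        apply NatTrans.ext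
        funext K
        apply HomologicalComplex.hom_ext
        intro i
        have h := adjZR.right_triangle_components (K.X i)
        simp; exact h }

section Derived

variable [HasDerivedCategory.{w} A] [HasDerivedCategory.{w} (Arrow A)]

noncomputable instance :
    CatCommSq ((ZF A).mapHomologicalComplex (ComplexShape.up ℤ))
      DerivedCategory.Q DerivedCategory.Q (ZF A).mapDerivedCategory :=
  ⟨(ZF A).mapDerivedCategoryFactors.symm⟩

noncomputable instance :
    CatCommSq ((RF A).mapHomologicalComplex (ComplexShape.up ℤ))
      DerivedCategory.Q DerivedCategory.Q (RF A).mapDerivedCategory :=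
  ⟨(RF A).mapDerivedCategoryFactors.symm⟩

/-- The derived adjunction. -/
noncomputable def adjD : (ZF A).mapDerivedCategory ⊣ (RF A).mapDerivedCategory :=
  adjHC.localization DerivedCategory.Q (HomologicalComplex.quasiIso A (ComplexShape.up ℤ))
    DerivedCategory.Q (HomologicalComplex.quasiIso (Arrow A) (ComplexShape.up ℤ))
    (ZF A).mapDerivedCategory (RF A).mapDerivedCategory

end Derived

universe w₁ w₂ v₁ v₂ u₁ u₂ u₃ v₃

/-- The derived single functor is the localization of the complex-level single functor. -/
noncomputable def singleQIso (C : Type u₁) [Category.{v₁} C] [Abelian C]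
    [HasDerivedCategory.{w₁} C] :
    DerivedCategory.singleFunctor C 0 ≅
      CochainComplex.singleFunctor C 0 ⋙ DerivedCategory.Q :=
  (SingleFunctors.evaluation _ _ 0).mapIso (DerivedCategory.singleFunctorsPostcompQIso C)

section MapSingle

variable {C₁ : Type u₁} [Category.{v₁} C₁] [Abelian C₁] [HasDerivedCategory.{w₁} C₁]
  {C₂ : Type u₂} [Category.{v₂} C₂] [Abelian C₂] [HasDerivedCategory.{w₂} C₂]
  (F : C₁ ⥤ C₂) [F.Additive] [PreservesFiniteLimits F] [PreservesFiniteColimits F]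

/-- Exact functors commute with the single functors to the derived category. -/
noncomputable def mapSingleIso (X : C₁) :
    F.mapDerivedCategory.obj ((DerivedCategory.singleFunctor C₁ 0).obj X) ≅
      (DerivedCategory.singleFunctor C₂ 0).obj (F.obj X) :=
  F.mapDerivedCategory.mapIso ((singleQIso C₁).app X) ≪≫
    F.mapDerivedCategoryFactors.app ((CochainComplex.singleFunctor C₁ 0).obj X) ≪≫
    DerivedCategory.Q.mapIso
      ((HomologicalComplex.singleMapHomologicalComplex F (ComplexShape.up ℤ) 0).app X) ≪≫
    (singleQIso C₂).symm.app (F.obj X)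

end MapSingle

section AddEquivs

variable {C : Type u₃} [Category.{v₃} C] [Preadditive C]

/-- `Iso.homCongr` as an additive equivalence. -/
noncomputable def homCongrAdd {X X' Y Y' : C} (e : X ≅ X') (e' : Y ≅ Y') :
    (X ⟶ Y) ≃+ (X' ⟶ Y') :=
  { e.homCongr e' with
    map_add' := fun f g => by simp [Iso.homCongr] }

/-- The hom equivalence of an adjunction as an additive equivalence. -/
noncomputable def adjHomAddEquiv {D : Type*} [Category D] [Preadditive D]
    {F : C ⥤ D} {G : D ⥤ C} (adj : F ⊣ G) [G.Additive] (X : C) (Y : D) :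
    (F.obj X ⟶ Y) ≃+ (X ⟶ G.obj Y) :=
  { adj.homEquiv X Y with
    map_add' := fun f g => by
      simp [Adjunction.homEquiv_unit, Preadditive.comp_add] }

end AddEquivs

end St16

open ZeroObject in
/-- for objects `X, V, W` of `A`, a morphism `g : V ⟶ W` viewed as an
object of `Arrow A`, and `z_X : 0 ⟶ X` the unique morphism from a zero object of `A`
to `X` viewed as an object of `Arrow A`, there is, for each `n : ℕ`, an isomorphism of
abelian groups `Ext^n_{Arrow A}(z_X, g) ≅ Ext^n_A(X, W)`. -/
theorem statement16 [EnoughProjectives A] [HasExt.{w} A]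
    [Abelian (Arrow A)] [HasExt.{w} (Arrow A)]
    (X V W : A) (g : V ⟶ W) (n : ℕ) :
    Nonempty (Abelian.Ext (Arrow.mk (0 : (0 : A) ⟶ X)) (Arrow.mk g) n ≃+
      Abelian.Ext X W n) := by
  letI : HasDerivedCategory A := HasDerivedCategory.standard A
  letI : HasDerivedCategory (Arrow A) := HasDerivedCategory.standard (Arrow A)
  refine ⟨Abelian.Ext.homAddEquiv.trans (AddEquiv.trans ?_ Abelian.Ext.homAddEquiv.symm)⟩
  exact (St16.homCongrAdd (St16.mapSingleIso (St16.ZF A) X).symm (Iso.refl _)).trans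
    ((St16.adjHomAddEquiv St16.adjD _ _).trans
      (St16.homCongrAdd (Iso.refl _)
        ((((St16.RF A).mapDerivedCategory.commShiftIso (n : ℤ)).app
            ((DerivedCategory.singleFunctor (Arrow A) 0).obj (Arrow.mk g))) ≪≫
          (shiftFunctor _ (n : ℤ)).mapIso (St16.mapSingleIso (St16.RF A) (Arrow.mk g)))))
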